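/- Let n ≥ 1, fix a type α = (α₁,…,αₙ) with index set I_α, exponents β_i and common value c, let p and q be the associated functionals, and let k > 0 and t₀ ∈ ℝ. Suppose (t_γ, x_γ) : [0,∞) → ℝ × ℝⁿ is C¹ with t_γ'(τ) = q(x_γ(τ))·(1 − p(x_γ(τ))^{2c})^k and p(x_γ(τ)) = 1 for all τ ≥ 0 (a trajectory of the extended desingularized system lying on the horizon). Suppose further (t, x) : [0,∞) → ℝ × ℝⁿ is C¹ with t'(τ) = q(x(τ))·(1 − p(x(τ))^{2c})^k, t(0) = t₀, p(x(τ)) < 1 for all τ ≥ 0, and |t(τ) − t_γ(τ)| + ‖x(τ) − x_γ(τ)‖ → 0 as τ → ∞. Then: (i) t_γ is constant, say t_γ ≡ t̄; (ii) ∫₀^∞ q(x(τ))·(1 − p(x(τ))^{2c})^k dτ = t̄ − t₀ < ∞. Hence the corresponding solution y(t) of the nonautonomous system y' = f(t,y) blows up at the finite time t_max = t̄. -/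

import Mathlib

open Real Set MeasureTheory Filter Topology

/-- The quasi-parabolic functional `p(x) = (∑_{i ∈ Iα} x_i^{2βᵢ})^{1/(2c)}`. -/
noncomputable def pQH {n : ℕ} (Iα : Finset (Fin n)) (β : Fin n → ℕ) (c : ℕ)
    (x : Fin n → ℝ) : ℝ :=
  (∑ i ∈ Iα, x i ^ (2 * β i)) ^ ((1 : ℝ) / (2 * (c : ℝ)))

/-- The functional `q(x) = 1 - ((2c-1)/(2c)) (1 - p(x)^{2c})`. -/
noncomputable def qQH {n : ℕ} (Iα : Finset (Fin n)) (β : Fin n → ℕ) (c : ℕ)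
    (x : Fin n → ℝ) : ℝ :=
  1 - ((2 * (c : ℝ) - 1) / (2 * (c : ℝ))) * (1 - pQH Iα β c x ^ (2 * (c : ℝ)))

/-- Nonautonomous blow-up: if `(t_γ, x_γ)` is a trajectory of the
extended desingularized system lying on the horizon, and `(t, x)` is a trajectory with
`p(x(τ)) < 1` that converges to `(t_γ, x_γ)` as `τ → ∞`, then `t_γ` is constant,
say `t_γ ≡ t̄`, and `∫₀^∞ q(x(τ)) (1 - p(x(τ))^{2c})^k dτ = t̄ - t₀ < ∞`; hence the
corresponding solution of the nonautonomous system blows up at the finite time `t̄`. -/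
theorem nonautonomous_blowup
    {n : ℕ} (hn : 1 ≤ n)
    (α : Fin n → ℕ) (hα : ∃ i, α i ≠ 0)
    (Iα : Finset (Fin n)) (hIα : ∀ i, i ∈ Iα ↔ 0 < α i)
    (c : ℕ) (hc : 0 < c)
    (β : Fin n → ℕ) (hβpos : ∀ i ∈ Iα, 0 < β i)
    (hβ : ∀ i ∈ Iα, α i * β i = c)
    (k t₀ : ℝ) (hk : 0 < k)
    (tγ : ℝ → ℝ) (xγ : ℝ → Fin n → ℝ) (t : ℝ → ℝ) (x : ℝ → Fin n → ℝ)
    (hxγc : ContinuousOn xγ (Ici 0))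
    (htγ : ∀ τ ∈ Ici (0 : ℝ), HasDerivWithinAt tγ
      (qQH Iα β c (xγ τ) * (1 - pQH Iα β c (xγ τ) ^ (2 * (c : ℝ))) ^ k) (Ici 0) τ)
    (hγhor : ∀ τ ∈ Ici (0 : ℝ), pQH Iα β c (xγ τ) = 1)
    (hxc : ContinuousOn x (Ici 0))
    (ht : ∀ τ ∈ Ici (0 : ℝ), HasDerivWithinAt t
      (qQH Iα β c (x τ) * (1 - pQH Iα β c (x τ) ^ (2 * (c : ℝ))) ^ k) (Ici 0) τ)
    (ht0 : t 0 = t₀)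
    (hxin : ∀ τ ∈ Ici (0 : ℝ), pQH Iα β c (x τ) < 1)
    (hconv : Tendsto (fun τ => |t τ - tγ τ| + ‖x τ - xγ τ‖) atTop (𝓝 0)) :
    ∃ tbar : ℝ,
      (∀ τ ∈ Ici (0 : ℝ), tγ τ = tbar) ∧
      IntegrableOn
        (fun τ => qQH Iα β c (x τ) * (1 - pQH Iα β c (x τ) ^ (2 * (c : ℝ))) ^ k)
        (Ici 0) ∧
      ∫ τ in Ici (0 : ℝ),
          qQH Iα β c (x τ) * (1 - pQH Iα β c (x τ) ^ (2 * (c : ℝ))) ^ k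
        = tbar - t₀ := by
  set g : ℝ → ℝ := fun τ => qQH Iα β c (x τ) * (1 - pQH Iα β c (x τ) ^ (2 * (c : ℝ))) ^ k
    with hg
  have hc' : (0 : ℝ) < 2 * (c : ℝ) := by positivity
  -- nonnegativity of g
  have hgpos : ∀ τ ∈ Ici (0 : ℝ), 0 ≤ g τ := by
    intro τ hτ
    have hp0 : 0 ≤ pQH Iα β c (x τ) := by
      apply Real.rpow_nonneg
      apply Finset.sum_nonneg
      intro i _
      rw [mul_comm, pow_mul]
      positivity
    have hp1 : pQH Iα β c (x τ) < 1 := hxin τ hτ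
    have hs0 : pQH Iα β c (x τ) ^ (2 * (c : ℝ)) < 1 := Real.rpow_lt_one hp0 hp1 hc'
    have hs1 : (0:ℝ) ≤ pQH Iα β c (x τ) ^ (2 * (c : ℝ)) := Real.rpow_nonneg hp0 _
    have hq : 0 ≤ qQH Iα β c (x τ) := by
      have hr : (2 * (c : ℝ) - 1) / (2 * (c : ℝ)) ≤ 1 := by
        rw [div_le_one hc']; linarith
      have hr0 : 0 ≤ (2 * (c : ℝ) - 1) / (2 * (c : ℝ)) := by
        apply div_nonneg _ hc'.le
        have : (1:ℝ) ≤ (c:ℝ) := by exact_mod_cast hc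
        linarith
      have hmul : ((2 * (c : ℝ) - 1) / (2 * (c : ℝ))) *
          (1 - pQH Iα β c (x τ) ^ (2 * (c : ℝ))) ≤ 1 := by
        have h1 := mul_le_of_le_one_right hr0
          (show 1 - pQH Iα β c (x τ) ^ (2 * (c : ℝ)) ≤ 1 by linarith)
        linarith
      unfold qQH; linarith
    exact mul_nonneg hq (Real.rpow_nonneg (by linarith) k)
  -- tγ is constant
  have htγ0 : ∀ s ∈ Ici (0 : ℝ), HasDerivWithinAt tγ 0 (Ici 0) s := by
    intro s hs
    have h := htγ s hs
    rw [hγhor s hs] at h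
    simpa [Real.one_rpow, Real.zero_rpow (ne_of_gt hk)] using h
  have hconst : ∀ τ ∈ Ici (0 : ℝ), tγ τ = tγ 0 := by
    intro τ hτ
    have hcont : ContinuousOn tγ (Icc 0 τ) :=
      fun s hs => ((htγ0 s hs.1).continuousWithinAt).mono (fun y hy => hy.1)
    have hderiv : ∀ s ∈ Ico (0:ℝ) τ, HasDerivWithinAt tγ 0 (Ici s) s :=
      fun s hs => (htγ0 s hs.1).mono (Ici_subset_Ici.2 hs.1)
    exact constant_of_has_deriv_right_zero hcont hderiv τ ⟨hτ, le_rfl⟩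
  refine ⟨tγ 0, hconst, ?_⟩
  -- t tends to tγ 0
  have habs : Tendsto (fun τ => |t τ - tγ τ|) atTop (𝓝 0) := by
    apply squeeze_zero (fun τ => abs_nonneg _)
      (fun τ => le_add_of_nonneg_right (norm_nonneg _)) hconv
  have hsub : Tendsto (fun τ => t τ - tγ τ) atTop (𝓝 0) := by
    rwa [tendsto_zero_iff_abs_tendsto_zero]
  have httend : Tendsto t atTop (𝓝 (tγ 0)) := by
    have : Tendsto (fun τ => (t τ - tγ τ) + tγ 0) atTop (𝓝 (0 + tγ 0)) :=
      hsub.add tendsto_const_nhds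
    rw [zero_add] at this
    apply this.congr'
    filter_upwards [eventually_ge_atTop (0:ℝ)] with τ hτ
    rw [hconst τ hτ]; ring
  -- derivative statements
  have hcont0 : ContinuousWithinAt t (Ici 0) 0 :=
    (ht 0 self_mem_Ici).continuousWithinAt
  have hderivAt : ∀ τ ∈ Ioi (0:ℝ), HasDerivAt t (g τ) τ :=
    fun τ hτ => (ht τ (le_of_lt hτ : (0:ℝ) ≤ τ)).hasDerivAt (Ici_mem_nhds hτ)
  have hgpos' : ∀ τ ∈ Ioi (0:ℝ), 0 ≤ g τ := fun τ hτ => hgpos τ (le_of_lt hτ : (0:ℝ) ≤ τ)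
  have hint : IntegrableOn g (Ioi 0) :=
    integrableOn_Ioi_deriv_of_nonneg hcont0 hderivAt hgpos' httend
  have hval : ∫ τ in Ioi (0:ℝ), g τ = tγ 0 - t 0 :=
    integral_Ioi_of_hasDerivAt_of_nonneg hcont0 hderivAt hgpos' httend
  constructor
  · rwa [integrableOn_Ici_iff_integrableOn_Ioi]
  · rw [integral_Ici_eq_integral_Ioi, hval, ht0]
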